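/- Let Z be a zero forcing set of a graph G with forcing vertices v_1,…,v_k as above, and let p ≤ k. Then |N_G[{v_1,…,v_p}]| ≤ |Z| + p. -/
import Mathlib


open scoped Classical

variable {V : Type*}

/-- `Z` is a zero forcing set of `G`: the vertices outside `Z` can be listed `u 0, …, u (k-1)`
so that each `u i` is the unique neighbor of some vertex `v i` of `Z ∪ {u j : j < i}`
outside `Z ∪ {u j : j < i}`. -/
def IsZeroForcingSet [Fintype V] (G : SimpleGraph V) (Z : Finset V) : Prop :=
  ∃ (k : ℕ) (u : Fin k → V) (v : Fin k → V),
    Function.Injective u ∧ (∀ w, w ∉ Z ↔ ∃ i, u i = w) ∧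
    ∀ i : Fin k,
      (v i ∈ Z ∨ ∃ j : Fin k, j < i ∧ u j = v i) ∧
      G.Adj (v i) (u i) ∧
      ∀ w, G.Adj (v i) w → w ∉ Z → (∀ j : Fin k, j < i → u j ≠ w) → w = u i

/-- The zero forcing number of `G`: minimum size of a zero forcing set. -/
noncomputable def zeroForcingNumber [Fintype V] (G : SimpleGraph V) : ℕ :=
  sInf {n | ∃ Z : Finset V, IsZeroForcingSet G Z ∧ Z.card = n}


/-- The closed neighborhood of a set of vertices. -/
def closedNbhd (G : SimpleGraph V) (S : Set V) : Set V :=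
  S ∪ {w | ∃ x ∈ S, G.Adj x w}

/-- For a zero forcing process with forcing vertices `v 0, …, v (k-1)` and `p ≤ k`,
`|N_G[{v 0, …, v (p-1)}]| ≤ |Z| + p`. -/
theorem stmt_5 [Fintype V] (G : SimpleGraph V) (Z : Finset V) (k : ℕ)
    (u v : Fin k → V)
    (hu : Function.Injective u) (huZ : ∀ w, w ∉ Z ↔ ∃ i, u i = w)
    (hv : ∀ i : Fin k,
      (v i ∈ Z ∨ ∃ j : Fin k, j < i ∧ u j = v i) ∧
      G.Adj (v i) (u i) ∧
      ∀ w, G.Adj (v i) w → w ∉ Z → (∀ j : Fin k, j < i → u j ≠ w) → w = u i)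
    (p : ℕ) (hp : p ≤ k) :
    (closedNbhd G (v '' {i : Fin k | (i : ℕ) < p})).ncard ≤ Z.card + p := by
  classical
  set S : Set V := (Z : Set V) ∪ u '' {j : Fin k | (j : ℕ) < p} with hS
  have hsub : closedNbhd G (v '' {i : Fin k | (i : ℕ) < p}) ⊆ S := by
    rintro x (⟨i, hi, rfl⟩ | ⟨y, ⟨i, hi, rfl⟩, hadj⟩)
    · rcases (hv i).1 with h | ⟨j, hj, hju⟩
      · exact Or.inl h
      · exact Or.inr ⟨j, lt_trans (Fin.lt_def.mp hj) hi, hju⟩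
    · by_cases hxZ : x ∈ Z
      · exact Or.inl hxZ
      · obtain ⟨j, hj⟩ := (huZ x).1 hxZ
        rcases le_or_gt (j : ℕ) (i : ℕ) with h | h
        · exact Or.inr ⟨j, lt_of_le_of_lt h hi, hj⟩
        · exfalso
          have := (hv i).2.2 x hadj hxZ (fun j' hj' hne => by
            have : j' = j := hu (hne.trans hj.symm)
            omega)
          have : j = i := hu (hj.trans this)
          omega
  have hfin : S.Finite := Set.Finite.union (Z.finite_toSet) (Set.Finite.image _ (Set.toFinite _))
  calc (closedNbhd G (v '' {i : Fin k | (i : ℕ) < p})).ncard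
      ≤ S.ncard := Set.ncard_le_ncard hsub hfin
    _ ≤ (Z : Set V).ncard + (u '' {j : Fin k | (j : ℕ) < p}).ncard := Set.ncard_union_le _ _
    _ ≤ Z.card + p := by
        gcongr
        · exact le_of_eq (Set.ncard_coe_finset Z)
        · calc (u '' {j : Fin k | (j : ℕ) < p}).ncard
              ≤ {j : Fin k | (j : ℕ) < p}.ncard := Set.ncard_image_le (Set.toFinite _)
            _ ≤ p := by
                have heq : {j : Fin k | (j : ℕ) < p} = (Fin.castLE hp) '' Set.univ := by
                  ext j
                  simp only [Set.mem_setOf_eq, Set.image_univ, Set.mem_range]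
                  constructor
                  · intro h; exact ⟨⟨j, h⟩, by ext; rfl⟩
                  · rintro ⟨i, rfl⟩; exact i.2.trans_le le_rfl
                rw [heq, Set.ncard_image_of_injective _ (Fin.castLE_injective hp),
                  Set.ncard_univ, Nat.card_eq_fintype_card, Fintype.card_fin]
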